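/- Let m, n : ℝ → ℝ be nonnegative, measurable and Lebesgue integrable, with H₁ = ∫_ℝ m and H₂ = ∫_ℝ n. Define u = p∗m, u_x, v = p∗n, v_x as the kernel integrals, and set M(x) = (u(x)+u_x(x))n(x) + (v_x(x)−v(x))m(x). Then for every x ∈ ℝ: −n(x)·(p∗((u+u_x)M))(x) − m(x)·(p∗((v_x−v)M))(x) ≤ H₁H₂(H₁+H₂)(m(x)+n(x)), where (p∗f)(x) = (1/2)∫_ℝ e^{−|x−y|} f(y) dy. -/

import Mathlib

open MeasureTheory

/-- `u = p ∗ m`, where `p(x) = (1/2) e^{-|x|}`. -/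
noncomputable def pConv (m : ℝ → ℝ) (x : ℝ) : ℝ :=
  (1 / 2) * ∫ y : ℝ, Real.exp (-|x - y|) * m y

/-- `u_x = (∂ₓ p) ∗ m`, where `p(x) = (1/2) e^{-|x|}`. -/
noncomputable def pxConv (m : ℝ → ℝ) (x : ℝ) : ℝ :=
  -(1 / 2) * ∫ y : ℝ, Real.sign (x - y) * Real.exp (-|x - y|) * m y

lemma conv_abs_le (k f g : ℝ → ℝ) (hk : AEStronglyMeasurable k volume)
    (hk1 : ∀ y, |k y| ≤ 1) (hf : Integrable f) (hg : Integrable g)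
    (hbound : ∀ y, |f y| ≤ g y) :
    |∫ y, k y * f y| ≤ ∫ y, g y := by
  have hkf : Integrable (fun y => k y * f y) := hf.bdd_mul (c := 1) hk (Filter.Eventually.of_forall fun y => hk1 y)
  calc |∫ y, k y * f y| ≤ ∫ y, |k y| * |f y| := by
        simpa [Real.norm_eq_abs, abs_mul] using
          norm_integral_le_integral_norm (μ := volume) (fun y => k y * f y)
    _ ≤ ∫ y, g y := by
        refine integral_mono (by simpa [abs_mul] using hkf.abs) hg fun y => ?_
        calc |k y| * |f y| ≤ 1 * |f y| :=
              mul_le_mul_of_nonneg_right (hk1 y) (abs_nonneg _)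
          _ = |f y| := one_mul _
          _ ≤ g y := hbound y

lemma measurable_realSign : Measurable Real.sign := by
  have h : Real.sign = fun r : ℝ => if r < 0 then (-1:ℝ) else if 0 < r then 1 else 0 := rfl
  rw [h]
  exact Measurable.ite (measurableSet_lt measurable_id measurable_const)
    measurable_const <| Measurable.ite (measurableSet_lt measurable_const measurable_id)
    measurable_const measurable_const

lemma realSign_abs_le (r : ℝ) : |Real.sign r| ≤ 1 := by
  rcases Real.sign_apply_eq r with h | h | h <;> rw [h] <;> norm_num

lemma exp_neg_abs_le_one (r : ℝ) : |Real.exp (-|r|)| ≤ 1 := by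
  rw [abs_of_pos (Real.exp_pos _)]
  exact Real.exp_le_one_iff.2 (neg_nonpos.2 (abs_nonneg _))

lemma pConv_measurable (m : ℝ → ℝ) (hm : Measurable m) : Measurable (pConv m) := by
  have h : StronglyMeasurable (Function.uncurry fun x y : ℝ => Real.exp (-|x - y|) * m y) :=
    (((Real.continuous_exp.comp ((continuous_abs.comp (continuous_fst.sub continuous_snd)).neg)).measurable).mul
      (hm.comp measurable_snd)).stronglyMeasurable
  exact measurable_const.mul h.integral_prod_right.measurable

lemma pxConv_measurable (m : ℝ → ℝ) (hm : Measurable m) : Measurable (pxConv m) := by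
  have h : StronglyMeasurable
      (Function.uncurry fun x y : ℝ => Real.sign (x - y) * Real.exp (-|x - y|) * m y) :=
    (((measurable_realSign.comp (measurable_fst.sub measurable_snd)).mul
      (Real.continuous_exp.comp
        ((continuous_abs.comp (continuous_fst.sub continuous_snd)).neg)).measurable).mul
      (hm.comp measurable_snd)).stronglyMeasurable
  exact measurable_const.mul h.integral_prod_right.measurable

lemma pConv_abs_le (f g : ℝ → ℝ) (hf : Integrable f) (hg : Integrable g)
    (hbound : ∀ y, |f y| ≤ g y) (x : ℝ) : |pConv f x| ≤ (∫ y, g y) / 2 := by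
  unfold pConv
  rw [abs_mul]
  have := conv_abs_le (fun y => Real.exp (-|x - y|)) f g
    ((Real.continuous_exp.comp
      ((continuous_abs.comp (continuous_const.sub continuous_id)).neg)).aestronglyMeasurable)
    (fun y => exp_neg_abs_le_one _) hf hg hbound
  rw [abs_of_pos (by norm_num : (0:ℝ) < 1/2)]
  linarith

lemma pxConv_abs_le (f g : ℝ → ℝ) (hf : Integrable f) (hg : Integrable g)
    (hbound : ∀ y, |f y| ≤ g y) (x : ℝ) : |pxConv f x| ≤ (∫ y, g y) / 2 := by
  unfold pxConv
  rw [abs_mul]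
  have := conv_abs_le (fun y => Real.sign (x - y) * Real.exp (-|x - y|)) f g
    (((measurable_realSign.comp (measurable_const.sub measurable_id)).mul
      (Real.continuous_exp.comp
        ((continuous_abs.comp (continuous_const.sub continuous_id)).neg)).measurable).aestronglyMeasurable)
    (fun y => by
      rw [abs_mul]
      calc |Real.sign (x - y)| * |Real.exp (-|x - y|)| ≤ 1 * 1 :=
            mul_le_mul (realSign_abs_le _) (exp_neg_abs_le_one _) (abs_nonneg _) zero_le_one
        _ = 1 := one_mul _)
    hf hg hbound
  have h2 : |-(1/2 : ℝ)| = 1/2 := by norm_num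
  rw [h2]
  have heq : (∫ y : ℝ, Real.sign (x - y) * Real.exp (-|x - y|) * f y)
      = ∫ y : ℝ, (fun y => Real.sign (x - y) * Real.exp (-|x - y|)) y * f y := rfl
  rw [heq]
  linarith
/-- For nonnegative, measurable, integrable `m, n` with `H₁ = ∫ m`, `H₂ = ∫ n`,
`u = p ∗ m`, `v = p ∗ n` and
`M = (u + u_x) n + (v_x - v) m`, one has the pointwise bound
`-n ⬝ (p ∗ ((u+u_x)M)) - m ⬝ (p ∗ ((v_x-v)M)) ≤ H₁H₂(H₁+H₂)(m+n)`. -/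
theorem nonlocal_term_bound_conv (m n : ℝ → ℝ) (H₁ H₂ : ℝ) (M : ℝ → ℝ)
    (hm : Measurable m) (hn : Measurable n)
    (hmnonneg : ∀ x : ℝ, 0 ≤ m x) (hnnonneg : ∀ x : ℝ, 0 ≤ n x)
    (hmint : Integrable m) (hnint : Integrable n)
    (hH₁ : H₁ = ∫ x : ℝ, m x) (hH₂ : H₂ = ∫ x : ℝ, n x)
    (hM : M = fun x => (pConv m x + pxConv m x) * n x
        + (pxConv n x - pConv n x) * m x)
    (x : ℝ) :
    -(n x) * pConv (fun y => (pConv m y + pxConv m y) * M y) x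
      - (m x) * pConv (fun y => (pxConv n y - pConv n y) * M y) x
      ≤ H₁ * H₂ * (H₁ + H₂) * (m x + n x) := by
  have h1 : 0 ≤ H₁ := hH₁ ▸ integral_nonneg hmnonneg
  have h2 : 0 ≤ H₂ := hH₂ ▸ integral_nonneg hnnonneg
  have hmabs : ∀ y, |m y| ≤ m y := fun y => le_of_eq (abs_of_nonneg (hmnonneg y))
  have hnabs : ∀ y, |n y| ≤ n y := fun y => le_of_eq (abs_of_nonneg (hnnonneg y))
  -- bounds on u + u_x and v_x - v
  have hu : ∀ y, |pConv m y + pxConv m y| ≤ H₁ := fun y => by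
    have a := pConv_abs_le m m hmint hmint hmabs y
    have b := pxConv_abs_le m m hmint hmint hmabs y
    calc |pConv m y + pxConv m y| ≤ |pConv m y| + |pxConv m y| := abs_add_le _ _
      _ ≤ (∫ z, m z) / 2 + (∫ z, m z) / 2 := add_le_add a b
      _ = H₁ := by rw [hH₁]; ring
  have hv : ∀ y, |pxConv n y - pConv n y| ≤ H₂ := fun y => by
    have a := pConv_abs_le n n hnint hnint hnabs y
    have b := pxConv_abs_le n n hnint hnint hnabs y
    calc |pxConv n y - pConv n y| ≤ |pxConv n y| + |pConv n y| := abs_sub _ _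
      _ ≤ (∫ z, n z) / 2 + (∫ z, n z) / 2 := add_le_add b a
      _ = H₂ := by rw [hH₂]; ring
  -- pointwise bound on M
  have hMbound : ∀ y, |M y| ≤ H₁ * n y + H₂ * m y := fun y => by
    rw [hM]
    calc |(pConv m y + pxConv m y) * n y + (pxConv n y - pConv n y) * m y|
        ≤ |(pConv m y + pxConv m y) * n y| + |(pxConv n y - pConv n y) * m y| := abs_add_le _ _
      _ = |pConv m y + pxConv m y| * |n y| + |pxConv n y - pConv n y| * |m y| := by
          rw [abs_mul, abs_mul]
      _ ≤ H₁ * n y + H₂ * m y :=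
          add_le_add
            ((mul_le_mul (hu y) (hnabs y) (abs_nonneg _) h1).trans_eq rfl)
            ((mul_le_mul (hv y) (hmabs y) (abs_nonneg _) h2).trans_eq rfl)
  -- measurability
  have humeas : AEStronglyMeasurable (fun y => pConv m y + pxConv m y) volume :=
    ((pConv_measurable m hm).add (pxConv_measurable m hm)).aestronglyMeasurable
  have hvmeas : AEStronglyMeasurable (fun y => pxConv n y - pConv n y) volume :=
    ((pxConv_measurable n hn).sub (pConv_measurable n hn)).aestronglyMeasurable
  have hunorm : ∀ y, ‖pConv m y + pxConv m y‖ ≤ H₁ := fun y => hu y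
  have hvnorm : ∀ y, ‖pxConv n y - pConv n y‖ ≤ H₂ := fun y => hv y
  -- integrability of M
  have hMint : Integrable M := by
    rw [hM]
    exact (hnint.bdd_mul humeas (Filter.Eventually.of_forall hunorm)).add (hmint.bdd_mul hvmeas (Filter.Eventually.of_forall hvnorm))
  -- bounding function g and its integral
  have hgint : Integrable (fun y => H₁ * n y + H₂ * m y) :=
    (hnint.const_mul H₁).add (hmint.const_mul H₂)
  have hgval : (∫ y, (H₁ * n y + H₂ * m y)) = 2 * (H₁ * H₂) := by
    rw [integral_add (hnint.const_mul H₁) (hmint.const_mul H₂),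
      integral_const_mul, integral_const_mul, ← hH₁, ← hH₂]
    ring
  -- the two convolution terms
  have hf1int : Integrable (fun y => (pConv m y + pxConv m y) * M y) :=
    hMint.bdd_mul humeas (Filter.Eventually.of_forall hunorm)
  have hf2int : Integrable (fun y => (pxConv n y - pConv n y) * M y) :=
    hMint.bdd_mul hvmeas (Filter.Eventually.of_forall hvnorm)
  have hg1int : Integrable (fun y => H₁ * (H₁ * n y + H₂ * m y)) := hgint.const_mul H₁
  have hg2int : Integrable (fun y => H₂ * (H₁ * n y + H₂ * m y)) := hgint.const_mul H₂
  have hb1 : |pConv (fun y => (pConv m y + pxConv m y) * M y) x| ≤ H₁ * (H₁ * H₂) := by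
    have := pConv_abs_le _ _ hf1int hg1int (fun y => by
      rw [abs_mul]
      calc |pConv m y + pxConv m y| * |M y| ≤ H₁ * (H₁ * n y + H₂ * m y) :=
        mul_le_mul (hu y) (hMbound y) (abs_nonneg _) h1) x
    have hval : (∫ y, H₁ * (H₁ * n y + H₂ * m y)) = H₁ * (2 * (H₁ * H₂)) := by
      rw [integral_const_mul, hgval]
    rw [hval] at this
    linarith
  have hb2 : |pConv (fun y => (pxConv n y - pConv n y) * M y) x| ≤ H₂ * (H₁ * H₂) := by
    have := pConv_abs_le _ _ hf2int hg2int (fun y => by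
      rw [abs_mul]
      calc |pxConv n y - pConv n y| * |M y| ≤ H₂ * (H₁ * n y + H₂ * m y) :=
        mul_le_mul (hv y) (hMbound y) (abs_nonneg _) h2) x
    have hval : (∫ y, H₂ * (H₁ * n y + H₂ * m y)) = H₂ * (2 * (H₁ * H₂)) := by
      rw [integral_const_mul, hgval]
    rw [hval] at this
    linarith
  have e1 : -(H₁ * (H₁ * H₂)) ≤ pConv (fun y => (pConv m y + pxConv m y) * M y) x :=
    neg_le_of_abs_le hb1
  have e2 : -(H₂ * (H₁ * H₂)) ≤ pConv (fun y => (pxConv n y - pConv n y) * M y) x :=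
    neg_le_of_abs_le hb2
  nlinarith [mul_le_mul_of_nonneg_left e1 (hnnonneg x),
    mul_le_mul_of_nonneg_left e2 (hmnonneg x),
    mul_nonneg (mul_nonneg h1 h2) (mul_nonneg h1 (hmnonneg x)),
    mul_nonneg (mul_nonneg h1 h2) (mul_nonneg h2 (hnnonneg x))]
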